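/- arXiv:1307.1661 — 4 statements merged into one kernel-verified Lean document; each statement's English description precedes it below -/
import Mathlib

section
/- Let b > a > 0, x ∈ ℝ^d, and let K be a cube containing B(x,a) with K ∩ ∂B(x,b) ≠ ∅. Let ω be a finite set of points in K and consider the complete graph (V,E) on ω with each edge weighted by the Euclidean distance between its endpoints. If ω contains a K-wall around B(x,a) in B(x,b), then no edge of E with one endpoint in B(x,a) and the other endpoint in the complement of B(x,b) belongs to any minimal spanning tree of (V,E). -/
open MeasureTheory Metric Set

noncomputable section

open Classical in
/-- Total edge weight of a graph (when its edge set is finite; `0` otherwise). -/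
def SimpleGraph.weightSum {V : Type*} (T : SimpleGraph V) (w : Sym2 V → ℝ) : ℝ :=
  if h : T.edgeSet.Finite then ∑ e ∈ h.toFinset, w e else 0

/-- `T` is a spanning tree of `G`. -/
def SimpleGraph.IsSpanningTreeOf {V : Type*} (T G : SimpleGraph V) : Prop :=
  T ≤ G ∧ T.Connected ∧ T.IsAcyclic

/-- Weight of a minimal spanning tree of `G` under edge weights `w`. -/
def mstWeight {V : Type*} (G : SimpleGraph V) (w : Sym2 V → ℝ) : ℝ :=
  sInf ((fun T => SimpleGraph.weightSum T w) '' {T | T.IsSpanningTreeOf G})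

/-- Euclidean edge weights on the complete graph on a set of points. -/
def euclWeight {d : ℕ} (s : Set (EuclideanSpace ℝ (Fin d))) : Sym2 s → ℝ :=
  Sym2.lift ⟨fun x y => dist (x : EuclideanSpace ℝ (Fin d)) (y : EuclideanSpace ℝ (Fin d)),
    fun _ _ => dist_comm _ _⟩

/-- Weight of a Euclidean minimal spanning tree of the complete graph on `s`. -/
def euclMST {d : ℕ} (s : Set (EuclideanSpace ℝ (Fin d))) : ℝ :=
  mstWeight (⊤ : SimpleGraph s) (euclWeight s)

/-- The closed `L^∞`-ball (a cube) `x + [-a,a]^d`. -/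
def box {d : ℕ} (x : EuclideanSpace ℝ (Fin d)) (a : ℝ) : Set (EuclideanSpace ℝ (Fin d)) :=
  {y | ∀ i, |y i - x i| ≤ a}

/-- `K` is a cube. -/
def IsCube {d : ℕ} (K : Set (EuclideanSpace ℝ (Fin d))) : Prop :=
  ∃ z s, 0 < s ∧ K = box z s

/-- `W` contains a `K`-wall around `B(x,a)` in `B(x,b)`: for any `p₁ ∈ ∂B(x,a)` and
`p₂ ∈ K ∩ ∂B(x,b)`, the set
`K ∩ W ∩ S(p₁, 3d(p₁,p₂)/4) ∩ S(p₂, 3d(p₁,p₂)/4) ∩ (B(x,b) \ B(x,a))` is nonempty. -/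
def ContainsWall {d : ℕ} (W K : Set (EuclideanSpace ℝ (Fin d)))
    (x : EuclideanSpace ℝ (Fin d)) (a b : ℝ) : Prop :=
  ∀ p₁ ∈ frontier (box x a), ∀ p₂ ∈ K ∩ frontier (box x b),
    (K ∩ W ∩ closedBall p₁ (3 * dist p₁ p₂ / 4) ∩
      closedBall p₂ (3 * dist p₁ p₂ / 4) ∩ (box x b \ box x a)).Nonempty

end


/-! ### Auxiliary lemmas -/

section AuxTopology

/-- Crossing the frontier: a preconnected set meeting both `t` and its complement
meets the frontier of `t`. -/
lemma cross_frontier {X : Type*} [TopologicalSpace X] {s t : Set X}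
    (hs : IsPreconnected s) (h1 : (s ∩ t).Nonempty) (h2 : (s \ t).Nonempty) :
    (s ∩ frontier t).Nonempty := by
  by_contra h
  rw [Set.not_nonempty_iff_eq_empty] at h
  have hfr : ∀ z ∈ s, z ∉ frontier t := fun z hz hf =>
    (Set.eq_empty_iff_forall_notMem.mp h z) ⟨hz, hf⟩
  have hsub : s ⊆ interior t ∪ interior tᶜ := by
    intro z hz
    by_cases hzc : z ∈ closure t
    · left
      by_contra hzi
      exact hfr z hz ⟨hzc, hzi⟩
    · right
      rwa [interior_compl, Set.mem_compl_iff]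
  obtain ⟨z1, hz1s, hz1t⟩ := h1
  obtain ⟨z2, hz2s, hz2t⟩ := h2
  have hz1 : z1 ∈ interior t := by
    rcases hsub hz1s with h' | h'
    · exact h'
    · exact absurd hz1t (by simpa using interior_subset h')
  have hz2 : z2 ∈ interior tᶜ := by
    rcases hsub hz2s with h' | h'
    · exact absurd (interior_subset h') hz2t
    · exact h'
  obtain ⟨z, _, hz⟩ := hs (interior t) (interior tᶜ) isOpen_interior isOpen_interior
    hsub ⟨z1, hz1s, hz1⟩ ⟨z2, hz2s, hz2⟩
  exact (by simpa using interior_subset hz.2 : z ∉ t) (interior_subset hz.1)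

end AuxTopology

section AuxBox

variable {d : ℕ} {x : EuclideanSpace ℝ (Fin d)} {a b : ℝ}

lemma box_closed : IsClosed (box x a) := by
  have : box x a = ⋂ i, (fun y : EuclideanSpace ℝ (Fin d) => |y i - x i|) ⁻¹' Set.Iic a := by
    ext y; simp [box]
  rw [this]
  exact isClosed_iInter fun i =>
    IsClosed.preimage ((((continuous_apply i).comp (PiLp.continuous_ofLp 2 _)).sub continuous_const).abs) isClosed_Iic

lemma box_convex : Convex ℝ (box x a) := by
  intro y hy z hz s t hs ht hst
  intro i
  have happ : (s • y + t • z) i = s * y i + t * z i := rfl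
  have key : s * y i + t * z i - x i = s * (y i - x i) + t * (z i - x i) := by
    linear_combination (x i) * hst
  rw [happ, key]
  calc |s * (y i - x i) + t * (z i - x i)| ≤ |s * (y i - x i)| + |t * (z i - x i)| := abs_add_le _ _
    _ = s * |y i - x i| + t * |z i - x i| := by
        rw [abs_mul, abs_mul, abs_of_nonneg hs, abs_of_nonneg ht]
    _ ≤ s * a + t * a := by gcongr; exacts [hy i, hz i]
    _ = a := by rw [← add_mul, hst, one_mul]

lemma box_mono (h : a ≤ b) : box x a ⊆ box x b :=
  fun _ hy i => (hy i).trans h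

lemma frontier_box_subset : frontier (box x a) ⊆ box x a :=
  box_closed.frontier_subset

lemma not_mem_box_of_frontier (hab : a < b) {p : EuclideanSpace ℝ (Fin d)}
    (hp : p ∈ frontier (box x b)) : p ∉ box x a := by
  have hU : IsOpen {y : EuclideanSpace ℝ (Fin d) | ∀ i, |y i - x i| < b} := by
    have : {y : EuclideanSpace ℝ (Fin d) | ∀ i, |y i - x i| < b} =
        ⋂ i, (fun y : EuclideanSpace ℝ (Fin d) => |y i - x i|) ⁻¹' Set.Iio b := by
      ext y; simp
    rw [this]
    exact isOpen_iInter_of_finite fun i =>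
      IsOpen.preimage ((((continuous_apply i).comp (PiLp.continuous_ofLp 2 _)).sub continuous_const).abs) isOpen_Iio
  have hsub : {y : EuclideanSpace ℝ (Fin d) | ∀ i, |y i - x i| < b} ⊆ interior (box x b) :=
    hU.subset_interior_iff.mpr (fun _ hy i => (hy i).le)
  rw [box_closed.frontier_eq] at hp
  intro hmem
  exact hp.2 (hsub fun i => lt_of_le_of_lt (hmem i) hab)

end AuxBox

section AuxGraph

open SimpleGraph

/-- In any graph, after deleting the edge `s(u,v)`, every vertex that could reach `u`
still reaches `u` or `v`. -/
lemma reach_or_aux {V : Type*} (G : SimpleGraph V) (u v : V) :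
    ∀ {w : V}, G.Walk w u →
      (G \ fromEdgeSet {s(u, v)}).Reachable w u ∨ (G \ fromEdgeSet {s(u, v)}).Reachable w v
  | _, SimpleGraph.Walk.nil => Or.inl (Reachable.refl _)
  | w, SimpleGraph.Walk.cons hadj p => by
    rename_i w'
    by_cases hc : s(w, w') = s(u, v)
    · rw [Sym2.eq_iff] at hc
      rcases hc with ⟨rfl, rfl⟩ | ⟨rfl, rfl⟩
      · exact Or.inl (Reachable.refl _)
      · exact Or.inr (Reachable.refl _)
    · have hadj' : (G \ fromEdgeSet {s(u, v)}).Adj w w' := by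
        rw [sdiff_adj, fromEdgeSet_adj]
        exact ⟨hadj, fun h => hc h.1⟩
      rcases reach_or_aux G u v p with h | h
      · exact Or.inl (hadj'.reachable.trans h)
      · exact Or.inr (hadj'.reachable.trans h)

lemma reach_or {V : Type*} {G : SimpleGraph V} (hG : G.Connected) (u v w : V) :
    (G \ fromEdgeSet {s(u, v)}).Reachable w u ∨ (G \ fromEdgeSet {s(u, v)}).Reachable w v :=
  reach_or_aux G u v (hG.preconnected w u).some

/-- Exchange lemma: replace the tree edge `s(u,v)` by `s(u,c)` where `c` lies on the
`v`-side of the tree minus that edge. -/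
lemma tree_exchange {V : Type*} (T : SimpleGraph V) (hTc : T.Connected) (hTa : T.IsAcyclic)
    {u v c : V} (hadj : T.Adj u v)
    (hreach : (T \ fromEdgeSet {s(u, v)}).Reachable c v) (hcu : c ≠ u) (hcv : c ≠ v) :
    ∃ T' : SimpleGraph V, T'.Connected ∧ T'.IsAcyclic ∧
      T'.edgeSet = (T.edgeSet \ {s(u, v)}) ∪ {s(u, c)} ∧ s(u, c) ∉ T.edgeSet := by
  classical
  set e : Sym2 V := s(u, v) with he_def
  set e' : Sym2 V := s(u, c) with he'_def
  have hbridge : ¬(T \ fromEdgeSet {e}).Reachable u v :=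
    ((isBridge_iff).mp (isAcyclic_iff_forall_edge_isBridge.mp hTa (T.mem_edgeSet.mpr hadj)))
  have he'T : e' ∉ T.edgeSet := by
    intro hmem
    have hTadj : T.Adj u c := T.mem_edgeSet.mp hmem
    by_cases h : e' = e
    · rw [he'_def, he_def, Sym2.eq_iff] at h
      rcases h with ⟨-, h⟩ | ⟨h1, h2⟩
      · exact hcv h
      · exact hcu h2
    · have hadj2 : (T \ fromEdgeSet {e}).Adj u c := by
        rw [sdiff_adj, fromEdgeSet_adj]
        exact ⟨hTadj, fun hh => h hh.1⟩
      exact hbridge (hadj2.reachable.trans hreach)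
  set T' : SimpleGraph V := (T \ fromEdgeSet {e}) ⊔ fromEdgeSet {e'} with hT'_def
  have hle : T \ fromEdgeSet {e} ≤ T' := le_sup_left
  have huc : T'.Adj u c := by
    have : (fromEdgeSet {e'}).Adj u c := (fromEdgeSet_adj _).mpr ⟨rfl, hcu.symm⟩
    exact (sup_adj _ _ _ _).mpr (Or.inr this)
  have huv : T'.Reachable u v := (huc.reachable).trans (hreach.mono hle)
  haveI : Nonempty V := ⟨u⟩
  have hconn : T'.Connected := by
    refine ⟨fun w w' => ?_⟩
    have trans_to_u : ∀ z : V,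
        (T \ fromEdgeSet {e}).Reachable z u ∨ (T \ fromEdgeSet {e}).Reachable z v →
        T'.Reachable z u := by
      rintro z (h | h)
      · exact h.mono hle
      · exact (h.mono hle).trans huv.symm
    exact (trans_to_u w (reach_or hTc u v w)).trans (trans_to_u w' (reach_or hTc u v w')).symm
  refine ⟨T', hconn, ?_, ?_, he'T⟩
  · -- acyclic
    intro w p hp
    by_cases hmem : e' ∈ p.edges
    · have hrc : T'.Adj u c ∧ (T' \ fromEdgeSet {e'}).Reachable u c :=
        (adj_and_reachable_delete_edges_iff_exists_cycle).mpr ⟨w, p, hp, hmem⟩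
      have hle2 : T' \ fromEdgeSet {e'} ≤ T \ fromEdgeSet {e} := by
        intro a b hab
        rw [sdiff_adj, sup_adj] at hab
        rcases hab with ⟨h1 | h1, h2⟩
        · exact h1
        · exact absurd h1 h2
      exact hbridge ((hrc.2.mono hle2).trans hreach)
    · have hsub : ∀ f ∈ p.edges, f ∈ T.edgeSet := by
        intro f hf
        have hf' : f ∈ T'.edgeSet := p.edges_subset_edgeSet hf
        simp only [hT'_def, edgeSet_sup, edgeSet_sdiff, edgeSet_fromEdgeSet,
          edgeSet_sdiff_sdiff_isDiag, Set.mem_union, Set.mem_diff, Set.mem_singleton_iff]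
          at hf'
        rcases hf' with h | h
        · exact h.1
        · exact absurd (h.1 ▸ hf) hmem
      exact hTa (p.transfer T hsub) (hp.transfer hsub)
  · -- edge set
    have hdiag : ({e'} : Set (Sym2 V)) \ {f | f.IsDiag} = {e'} := by
      ext f
      simp only [Set.mem_diff, Set.mem_singleton_iff, Set.mem_setOf_eq, and_iff_left_iff_imp]
      rintro rfl
      exact fun h => hcu (Sym2.isDiag_iff_proj_eq.mp h).symm
    rw [hT'_def, edgeSet_sup, edgeSet_sdiff, edgeSet_fromEdgeSet,
      edgeSet_sdiff_sdiff_isDiag, edgeSet_fromEdgeSet]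
    exact congrArg _ hdiag

lemma weight_exchange {V : Type*} [Fintype V] {T T' : SimpleGraph V} (w : Sym2 V → ℝ)
    {e e' : Sym2 V} (he : e ∈ T.edgeSet) (he' : e' ∉ T.edgeSet)
    (hE : T'.edgeSet = (T.edgeSet \ {e}) ∪ {e'}) :
    T'.weightSum w = T.weightSum w - w e + w e' := by
  classical
  rw [SimpleGraph.weightSum, SimpleGraph.weightSum, dif_pos (Set.toFinite _),
    dif_pos (Set.toFinite _)]
  have key : (Set.toFinite T'.edgeSet).toFinset
      = insert e' ((Set.toFinite T.edgeSet).toFinset.erase e) := by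
    ext f
    simp only [Set.Finite.mem_toFinset, hE, Set.mem_union, Set.mem_diff,
      Set.mem_singleton_iff, Finset.mem_insert, Finset.mem_erase, Set.Finite.mem_toFinset]
    tauto
  rw [key, Finset.sum_insert (by
    simp only [Finset.mem_erase, Set.Finite.mem_toFinset]
    exact fun h => he' h.2),
    Finset.sum_erase_eq_sub (by simpa using he)]
  ring

lemma weightSum_nonneg {V : Type*} (T : SimpleGraph V) {w : Sym2 V → ℝ}
    (hw : ∀ e, 0 ≤ w e) : 0 ≤ T.weightSum w := by
  rw [SimpleGraph.weightSum]
  split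
  · exact Finset.sum_nonneg fun e _ => hw e
  · exact le_refl 0

lemma mstWeight_le {V : Type*} {G : SimpleGraph V} {w : Sym2 V → ℝ}
    (hw : ∀ e, 0 ≤ w e) {T' : SimpleGraph V} (hT' : T'.IsSpanningTreeOf G) :
    mstWeight G w ≤ T'.weightSum w := by
  apply csInf_le
  · refine ⟨0, ?_⟩
    rintro r ⟨T'', -, rfl⟩
    exact weightSum_nonneg T'' hw
  · exact ⟨T', hT', rfl⟩

end AuxGraph

/-- **Walls shield long MST edges** (Chatterjee–Sen, Lemma 6.1).  Let `b > a > 0`,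
`x ∈ ℝ^d`, and let `K` be a cube containing `B(x,a)` with `K ∩ ∂B(x,b) ≠ ∅`.  If a
finite set `ω ⊆ K` contains a `K`-wall around `B(x,a)` in `B(x,b)`, then no edge of
the complete graph on `ω` (with Euclidean weights) with one endpoint in `B(x,a)` and
the other outside `B(x,b)` belongs to any minimal spanning tree of that graph. -/
theorem wall_blocks_long_mst_edges
    {d : ℕ} (x : EuclideanSpace ℝ (Fin d)) (a b : ℝ) (ha : 0 < a) (hab : a < b)
    (K : Set (EuclideanSpace ℝ (Fin d))) (hK : IsCube K)
    (hBK : box x a ⊆ K) (hKb : (K ∩ frontier (box x b)).Nonempty)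
    (ω : Finset (EuclideanSpace ℝ (Fin d))) (hω : (ω : Set (EuclideanSpace ℝ (Fin d))) ⊆ K)
    (hwall : ContainsWall (ω : Set (EuclideanSpace ℝ (Fin d))) K x a b)
    (T : SimpleGraph ((ω : Set (EuclideanSpace ℝ (Fin d)))))
    (hT : T.IsSpanningTreeOf (⊤ : SimpleGraph ((ω : Set (EuclideanSpace ℝ (Fin d))))))
    (hmin : T.weightSum (euclWeight (ω : Set (EuclideanSpace ℝ (Fin d)))) =
      euclMST (ω : Set (EuclideanSpace ℝ (Fin d)))) :
    ∀ y₁ y₂ : (ω : Set (EuclideanSpace ℝ (Fin d))),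
      (y₁ : EuclideanSpace ℝ (Fin d)) ∈ box x a →
      (y₂ : EuclideanSpace ℝ (Fin d)) ∉ box x b →
      ¬ T.Adj y₁ y₂ := by
  classical
  intro y₁ y₂ h₁ h₂ hadj
  obtain ⟨hTle, hTc, hTa⟩ := hT
  -- Geometry: pick crossing points of the segment with the two box frontiers.
  have hy1K : (y₁ : EuclideanSpace ℝ (Fin d)) ∈ K := hω y₁.2
  have hy2K : (y₂ : EuclideanSpace ℝ (Fin d)) ∈ K := hω y₂.2
  obtain ⟨z, sz, hsz, hKeq⟩ := hK
  have hKconv : Convex ℝ K := by rw [hKeq]; exact box_convex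
  obtain ⟨p₁, hp₁seg, hp₁f⟩ := cross_frontier
    (convex_segment (y₁ : EuclideanSpace ℝ (Fin d)) (y₂ : EuclideanSpace ℝ (Fin d))).isPreconnected
    ⟨_, left_mem_segment ℝ _ _, h₁⟩
    ⟨_, right_mem_segment ℝ _ _, fun h => h₂ (box_mono hab.le h)⟩
  have hp₁box : p₁ ∈ box x a := frontier_box_subset hp₁f
  obtain ⟨p₂, hp₂seg, hp₂f⟩ := cross_frontier
    (convex_segment p₁ (y₂ : EuclideanSpace ℝ (Fin d))).isPreconnected
    ⟨p₁, left_mem_segment ℝ _ _, box_mono hab.le hp₁box⟩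
    ⟨_, right_mem_segment ℝ _ _, h₂⟩
  have hp₁K : p₁ ∈ K := hKconv.segment_subset hy1K hy2K hp₁seg
  have hp₂K : p₂ ∈ K := hKconv.segment_subset hp₁K hy2K hp₂seg
  obtain ⟨q, ⟨⟨⟨⟨hqK, hqω⟩, hq1⟩, hq2⟩, hqb, hqa⟩⟩ := hwall p₁ hp₁f p₂ ⟨hp₂K, hp₂f⟩
  have hD : 0 < dist p₁ p₂ :=
    dist_pos.mpr fun h => (not_mem_box_of_frontier hab hp₂f) (h ▸ hp₁box)
  have hsum1 : dist (y₁ : EuclideanSpace ℝ (Fin d)) p₁ + dist p₁ (y₂ : EuclideanSpace ℝ (Fin d)) = dist (y₁ : EuclideanSpace ℝ (Fin d)) (y₂ : EuclideanSpace ℝ (Fin d)) :=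
    dist_add_dist_of_mem_segment hp₁seg
  have hsum2 : dist p₁ p₂ + dist p₂ (y₂ : EuclideanSpace ℝ (Fin d)) = dist p₁ (y₂ : EuclideanSpace ℝ (Fin d)) :=
    dist_add_dist_of_mem_segment hp₂seg
  have hq1' : dist q p₁ ≤ 3 * dist p₁ p₂ / 4 := mem_closedBall.mp hq1
  have hq2' : dist q p₂ ≤ 3 * dist p₁ p₂ / 4 := mem_closedBall.mp hq2
  have hlt1 : dist (y₁ : EuclideanSpace ℝ (Fin d)) q < dist (y₁ : EuclideanSpace ℝ (Fin d)) (y₂ : EuclideanSpace ℝ (Fin d)) := by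
    have ht := dist_triangle (y₁ : EuclideanSpace ℝ (Fin d)) p₁ q
    have h0 : (0 : ℝ) ≤ dist p₂ (y₂ : EuclideanSpace ℝ (Fin d)) := dist_nonneg
    have hcomm : dist p₁ q = dist q p₁ := dist_comm _ _
    linarith
  have hlt2 : dist q (y₂ : EuclideanSpace ℝ (Fin d)) < dist (y₁ : EuclideanSpace ℝ (Fin d)) (y₂ : EuclideanSpace ℝ (Fin d)) := by
    have ht := dist_triangle q p₂ (y₂ : EuclideanSpace ℝ (Fin d))
    have h0 : (0 : ℝ) ≤ dist (y₁ : EuclideanSpace ℝ (Fin d)) p₁ := dist_nonneg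
    linarith
  set qv : (ω : Set (EuclideanSpace ℝ (Fin d))) := ⟨q, hqω⟩ with hqv_def
  have hqne1 : qv ≠ y₁ := by
    intro h
    apply hqa
    have hq_eq : q = (y₁ : EuclideanSpace ℝ (Fin d)) := congrArg Subtype.val h
    rw [hq_eq]; exact h₁
  have hqne2 : qv ≠ y₂ := by
    intro h
    apply h₂
    have hq_eq : q = (y₂ : EuclideanSpace ℝ (Fin d)) := congrArg Subtype.val h
    rw [← hq_eq]; exact hqb
  -- Graph part
  have hwnn : ∀ f : Sym2 (ω : Set (EuclideanSpace ℝ (Fin d))), 0 ≤ euclWeight (ω : Set (EuclideanSpace ℝ (Fin d))) f := by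
    intro f
    induction f using Sym2.ind with
    | _ u c =>
      show (0 : ℝ) ≤ dist (u : EuclideanSpace ℝ (Fin d)) (c : EuclideanSpace ℝ (Fin d))
      exact dist_nonneg
  unfold euclMST at hmin
  rcases reach_or hTc y₁ y₂ qv with hr | hr
  · -- `qv` lies on the `y₁` side; exchange edge `s(y₂,y₁)` for `s(y₂,qv)`
    have hswap : s(y₂, y₁) = s(y₁, y₂) := Sym2.eq_swap
    have hr' : ((T \ SimpleGraph.fromEdgeSet {s(y₂, y₁)}).Reachable qv y₁) := by
      rw [hswap]; exact hr
    obtain ⟨T', hc', ha', hE', hnotin⟩ := tree_exchange T hTc hTa hadj.symm hr' hqne2 hqne1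
    have hEmem : s(y₂, y₁) ∈ T.edgeSet := T.mem_edgeSet.mpr hadj.symm
    have hwx := weight_exchange (euclWeight (ω : Set (EuclideanSpace ℝ (Fin d)))) hEmem hnotin hE'
    have hwlt : euclWeight (ω : Set (EuclideanSpace ℝ (Fin d))) s(y₂, qv) < euclWeight (ω : Set (EuclideanSpace ℝ (Fin d))) s(y₂, y₁) := by
      show dist (y₂ : EuclideanSpace ℝ (Fin d)) q < dist (y₂ : EuclideanSpace ℝ (Fin d)) (y₁ : EuclideanSpace ℝ (Fin d))
      rw [dist_comm (y₂ : EuclideanSpace ℝ (Fin d)) q, dist_comm (y₂ : EuclideanSpace ℝ (Fin d)) (y₁ : EuclideanSpace ℝ (Fin d))]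
      exact hlt2
    have hmle := mstWeight_le hwnn ⟨le_top, hc', ha'⟩
    linarith
  · -- `qv` lies on the `y₂` side; exchange edge `s(y₁,y₂)` for `s(y₁,qv)`
    obtain ⟨T', hc', ha', hE', hnotin⟩ := tree_exchange T hTc hTa hadj hr hqne1 hqne2
    have hEmem : s(y₁, y₂) ∈ T.edgeSet := T.mem_edgeSet.mpr hadj
    have hwx := weight_exchange (euclWeight (ω : Set (EuclideanSpace ℝ (Fin d)))) hEmem hnotin hE'
    have hwlt : euclWeight (ω : Set (EuclideanSpace ℝ (Fin d))) s(y₁, qv) < euclWeight (ω : Set (EuclideanSpace ℝ (Fin d))) s(y₁, y₂) := by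
      show dist (y₁ : EuclideanSpace ℝ (Fin d)) q < dist (y₁ : EuclideanSpace ℝ (Fin d)) (y₂ : EuclideanSpace ℝ (Fin d))
      exact hlt1
    have hmle := mstWeight_le hwnn ⟨le_top, hc', ha'⟩
    linarith
end

section
/- Let d ≥ 2, let x ∈ ℝ^d, let n be a positive integer, and let 𝒫 be a homogeneous Poisson point process of intensity one on ℝ^d. Then for any a₀ > 0 there exist constants c and c' depending only on a₀ and d such that for every 0 < a ≤ a₀ with B(x,a) ⊂ B(n), and every b with b > a and B(n) ∩ ∂B(x,b) ≠ ∅, P(𝒫 does not contain a B(n)-wall around B(x,a) in B(x,b)) ≤ c exp(−c' b^d). -/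
open MeasureTheory Metric Set

/-- `P` is a homogeneous Poisson point process with intensity `1` on `ℝ^d`. -/
def IsPoissonPP {d : ℕ} {Ω : Type*} [MeasurableSpace Ω] (Pr : Measure Ω)
    (P : Ω → Set (EuclideanSpace ℝ (Fin d))) : Prop :=
  (∀ ω, ∀ K : Set (EuclideanSpace ℝ (Fin d)), IsCompact K → (P ω ∩ K).Finite) ∧
  ∀ (n : ℕ) (A : Fin n → Set (EuclideanSpace ℝ (Fin d))),
    (∀ i, MeasurableSet (A i)) → Pairwise (Function.onFun Disjoint A) →
    ProbabilityTheory.iIndepFun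
      (fun i ω => (P ω ∩ A i).ncard) Pr ∧
    ∀ i, volume (A i) ≠ ⊤ → ∀ k : ℕ,
      Pr {ω | (P ω ∩ A i).ncard = k} =
        ENNReal.ofReal (Real.exp (-(volume (A i)).toReal) *
          (volume (A i)).toReal ^ k / (Nat.factorial k))

section AuxWall
variable {d : ℕ}

lemma box_eq_preimage (c : EuclideanSpace ℝ (Fin d)) (r : ℝ) :
    box c r = (MeasurableEquiv.toLp 2 (Fin d → ℝ)).symm ⁻¹'
      (Set.univ.pi fun i => Set.Icc (c i - r) (c i + r)) := by
  ext y
  simp only [box, mem_setOf_eq, mem_preimage, Set.mem_pi, mem_univ, forall_true_left,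
    Set.mem_Icc, MeasurableEquiv.toLp_symm_apply]
  refine forall_congr' fun i => ?_
  rw [abs_sub_le_iff]
  constructor <;> intro h <;> constructor <;> linarith [h.1, h.2]

lemma measurableSet_box (c : EuclideanSpace ℝ (Fin d)) (r : ℝ) : MeasurableSet (box c r) := by
  rw [box_eq_preimage]
  exact (MeasurableEquiv.toLp 2 (Fin d → ℝ)).symm.measurable
    (MeasurableSet.univ_pi fun i => measurableSet_Icc)

lemma volume_box (c : EuclideanSpace ℝ (Fin d)) {r : ℝ} (hr : 0 ≤ r) :
    volume (box c r) = ENNReal.ofReal (2 * r) ^ d := by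
  rw [box_eq_preimage,
    (EuclideanSpace.volume_preserving_symm_measurableEquiv_toLp (Fin d)).measure_preimage
      ((MeasurableSet.univ_pi fun i => measurableSet_Icc).nullMeasurableSet),
    volume_pi_pi]
  have : ∀ i : Fin d, volume (Set.Icc (c i - r) (c i + r)) = ENNReal.ofReal (2 * r) := by
    intro i; rw [Real.volume_Icc]; ring_nf
  simp [this]

lemma coord_le_dist (u v : EuclideanSpace ℝ (Fin d)) (i : Fin d) : |u i - v i| ≤ dist u v := by
  rw [EuclideanSpace.dist_eq, ← Real.sqrt_sq_eq_abs]
  apply Real.sqrt_le_sqrt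
  have := Finset.single_le_sum (f := fun j => dist (u j) (v j) ^ 2)
    (fun j _ => sq_nonneg _) (Finset.mem_univ i)
  simp only [Real.dist_eq, sq_abs] at this ⊢
  exact this

lemma dist_le_of_coord_le {u v : EuclideanSpace ℝ (Fin d)} {m : ℝ} (hm : 0 ≤ m)
    (h : ∀ i, |u i - v i| ≤ m) : dist u v ≤ Real.sqrt d * m := by
  rw [EuclideanSpace.dist_eq]
  have h1 : ∑ i, dist (u i) (v i) ^ 2 ≤ (d : ℝ) * m ^ 2 := by
    calc ∑ i, dist (u i) (v i) ^ 2 ≤ ∑ _i : Fin d, m ^ 2 := by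
          apply Finset.sum_le_sum; intro i _
          have := h i; rw [Real.dist_eq]
          nlinarith [abs_nonneg (u i - v i), abs_sub_abs_le_abs_sub (u i) (v i)]
      _ = (d : ℝ) * m ^ 2 := by simp [mul_comm]
  calc Real.sqrt (∑ i, dist (u i) (v i) ^ 2) ≤ Real.sqrt ((d : ℝ) * m ^ 2) :=
        Real.sqrt_le_sqrt h1
    _ = Real.sqrt d * m := by
        rw [Real.sqrt_mul (Nat.cast_nonneg d), Real.sqrt_sq hm]

lemma isClosed_box (c : EuclideanSpace ℝ (Fin d)) (r : ℝ) : IsClosed (box c r) := by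
  have : box c r = ⋂ i, {y : EuclideanSpace ℝ (Fin d) | |y i - c i| ≤ r} := by
    ext y; simp [box, mem_iInter]
  rw [this]
  refine isClosed_iInter fun i => ?_
  have hc : Continuous fun y : EuclideanSpace ℝ (Fin d) => |y i - c i| :=
    continuous_abs.comp (((continuous_apply i).comp
      (PiLp.continuous_ofLp 2 fun _ : Fin d => ℝ)).sub continuous_const)
  exact isClosed_le hc continuous_const

lemma frontier_box_subset_s13 (x : EuclideanSpace ℝ (Fin d)) (r : ℝ) :
    frontier (box x r) ⊆ {p | (∀ i, |p i - x i| ≤ r) ∧ ∃ i, r ≤ |p i - x i|} := by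
  intro p hp
  have h1 : p ∈ box x r := by
    have := frontier_subset_closure hp
    rwa [(isClosed_box x r).closure_eq] at this
  refine ⟨h1, ?_⟩
  by_contra hcon
  push_neg at hcon
  have hU : IsOpen {y : EuclideanSpace ℝ (Fin d) | ∀ i, |y i - x i| < r} := by
    have : {y : EuclideanSpace ℝ (Fin d) | ∀ i, |y i - x i| < r}
        = ⋂ i, {y : EuclideanSpace ℝ (Fin d) | |y i - x i| < r} := by
      ext y; simp [mem_iInter]
    rw [this]
    refine isOpen_iInter_of_finite fun i => ?_
    have hc : Continuous fun y : EuclideanSpace ℝ (Fin d) => |y i - x i| :=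
      continuous_abs.comp (((continuous_apply i).comp
        (PiLp.continuous_ofLp 2 fun _ : Fin d => ℝ)).sub continuous_const)
    exact isOpen_lt hc continuous_const
  have hsub : {y : EuclideanSpace ℝ (Fin d) | ∀ i, |y i - x i| < r} ⊆ box x r :=
    fun y hy i => (hy i).le
  have : p ∈ interior (box x r) := interior_maximal hsub hU hcon
  exact hp.2 this

end AuxWall

set_option maxHeartbeats 2000000 in
/-- **Existence of walls with high probability** (Chatterjee–Sen, Lemma 6.3).
Let `d ≥ 2` and let `P` be a rate-one Poisson process on `ℝ^d`.  For any `a₀ > 0`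
there are constants `c, c' > 0` depending only on `a₀` and `d` such that for every
positive integer `n`, every `x`, every `0 < a ≤ a₀` with `B(x,a) ⊆ B(n)`, and every
`b > a` with `B(n) ∩ ∂B(x,b) ≠ ∅`,
`P(P contains no B(n)-wall around B(x,a) in B(x,b)) ≤ c exp(-c' b^d)`. -/
theorem wall_exists_whp
    {d : ℕ} (hd : 2 ≤ d)
    {Ω : Type*} [MeasurableSpace Ω] (Pr : Measure Ω) [IsProbabilityMeasure Pr]
    (P : Ω → Set (EuclideanSpace ℝ (Fin d))) (hP : IsPoissonPP Pr P)
    (a₀ : ℝ) (ha₀ : 0 < a₀) :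
    ∃ c c' : ℝ, 0 < c ∧ 0 < c' ∧
      ∀ (n : ℕ), 0 < n → ∀ (x : EuclideanSpace ℝ (Fin d)) (a : ℝ),
        0 < a → a ≤ a₀ → box x a ⊆ box 0 (n : ℝ) →
      ∀ b : ℝ, a < b → (box 0 (n : ℝ) ∩ frontier (box x b)).Nonempty →
        Pr {ω | ¬ ContainsWall (P ω) (box 0 (n : ℝ)) x a b} ≤
          ENNReal.ofReal (c * Real.exp (-c' * b ^ d)) := by
  have hd2 : (2:ℝ) ≤ (d:ℝ) := by exact_mod_cast hd
  have hσ1 : (1:ℝ) ≤ Real.sqrt d := by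
    calc (1:ℝ) = Real.sqrt 1 := Real.sqrt_one.symm
    _ ≤ Real.sqrt d := Real.sqrt_le_sqrt (by linarith)
  set σ : ℝ := Real.sqrt d with hσdef
  have hσ0 : 0 < σ := lt_of_lt_of_le one_pos hσ1
  have hσd : σ ≤ (d:ℝ) := by
    calc σ ≤ Real.sqrt ((d:ℝ)^2) := Real.sqrt_le_sqrt (by nlinarith)
    _ = (d:ℝ) := Real.sqrt_sq (by positivity)
  clear_value σ
  set c' : ℝ := (1/(40*σ))^d with hc'def
  have hc'0 : 0 < c' := by positivity
  clear_value c'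
  set B₀ : ℝ := 10*σ*(a₀+1) with hB₀def
  have hB₀0 : 0 < B₀ := by positivity
  clear_value B₀
  set c : ℝ := (80*(d:ℝ)+3)^d + Real.exp (c' * B₀^d) with hcdef
  have hc0 : 0 < c := by
    rw [hcdef]
    have h1 : (0:ℝ) < (80*(d:ℝ)+3)^d := by positivity
    linarith [Real.exp_pos (c' * B₀^d)]
  clear_value c
  refine ⟨c, c', hc0, hc'0, ?_⟩
  intro n hn x a ha haa₀ hsub b hab hfr
  have hb0 : 0 < b := ha.trans hab
  by_cases hbB : b ≤ B₀
  · -- small b : bound probability by 1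
    have hbd : b^d ≤ B₀^d := pow_le_pow_left₀ hb0.le hbB d
    have hexp : Real.exp (c' * B₀^d) * Real.exp (-c' * b^d)
        = Real.exp (c'*B₀^d + -c'*b^d) := (Real.exp_add _ _).symm
    have h2 : (1:ℝ) ≤ Real.exp (c'*B₀^d + -c'*b^d) := Real.one_le_exp (by nlinarith)
    have h3 : (0:ℝ) ≤ (80*(d:ℝ)+3)^d * Real.exp (-c' * b^d) := by positivity
    have h4 : c * Real.exp (-c'*b^d)
        = (80*(d:ℝ)+3)^d * Real.exp (-c'*b^d) + Real.exp (c'*B₀^d) * Real.exp (-c'*b^d) := by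
      rw [hcdef]; ring
    have h1 : (1:ℝ) ≤ c * Real.exp (-c' * b^d) := by rw [h4, hexp]; linarith
    calc Pr {ω | ¬ ContainsWall (P ω) (box 0 (n:ℝ)) x a b} ≤ 1 := prob_le_one
    _ ≤ ENNReal.ofReal (c * Real.exp (-c' * b^d)) := by
        rw [← ENNReal.ofReal_one]; exact ENNReal.ofReal_le_ofReal h1
  · push_neg at hbB
    replace hbB : B₀ ≤ b := hbB.le
    set s : ℝ := b/(20*σ) with hsdef
    have hs0 : 0 < s := by positivity
    have hσs : σ * s = b/20 := by rw [hsdef]; field_simp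
    have h20s : 20*s ≤ b := by
      have h1 : 20*s = b/σ := by rw [hsdef]; field_simp
      rw [h1]; exact div_le_self hb0.le hσ1
    clear_value s
    have hn0 : (0:ℝ) ≤ (n:ℝ) := Nat.cast_nonneg n
    -- x lies in the big box
    have hx : ∀ i, |x i| ≤ (n:ℝ) := by
      intro i
      have hxmem : x ∈ box x a := by intro j; simp [ha.le]
      have := hsub hxmem i
      simpa using this
    -- b ≤ 2n
    obtain ⟨p, hpK, hpfr⟩ := hfr
    obtain ⟨ip, hip⟩ := (frontier_box_subset_s13 x b hpfr).2
    have hpn : |p ip| ≤ (n:ℝ) := by simpa using hpK ip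
    have hb2n : b ≤ 2*(n:ℝ) := by
      have h1 := abs_le.mp hpn
      have h2 := abs_le.mp (hx ip)
      have h3 : |p ip - x ip| ≤ 2*(n:ℝ) := abs_le.mpr ⟨by linarith, by linarith⟩
      linarith [hip]
    set L : ℝ := (n:ℝ) - s/2 with hLdef
    have hL0 : 0 ≤ L := by rw [hLdef]; linarith
    clear_value L
    set cl : ℝ → ℝ := fun t => max (-L) (min L t) with hcldef
    have hcl_lip : ∀ u v : ℝ, |cl u - cl v| ≤ |u - v| := by
      intro u v
      calc |cl u - cl v| = |max (min L u) (-L) - max (min L v) (-L)| := by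
            rw [hcldef]; simp only [max_comm]
      _ ≤ |min L u - min L v| := abs_max_sub_max_le_abs _ _ _
      _ ≤ max |L - L| |u - v| := abs_min_sub_min_le_max _ _ _ _
      _ = |u - v| := by simp
    have hcl_bound : ∀ t, |cl t| ≤ L := by
      intro t; rw [abs_le, hcldef]
      refine ⟨le_max_left _ _, max_le (by linarith) (min_le_left _ _)⟩
    have hcl_close : ∀ t, |t| ≤ (n:ℝ) → |cl t - t| ≤ s/2 := by
      intro t ht
      rw [abs_le] at ht
      simp only [hcldef]
      rw [abs_le]
      rcases le_total t (-L) with h1 | h1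
      · have hmin : min L t = t := min_eq_right (le_trans h1 (by linarith))
        rw [hmin, max_eq_left h1]
        constructor <;> [linarith [hs0.le]; linarith [ht.1]]
      · rcases le_total t L with h2 | h2
        · rw [min_eq_right h2, max_eq_right h1]
          constructor <;> linarith [hs0.le]
        · rw [min_eq_left h2, max_eq_right (by linarith : -L ≤ L)]
          constructor <;> linarith [ht.2]
    clear_value cl
    set M : ℤ := 40*(d:ℤ) + 1 with hMdef
    clear_value M
    set I : Finset (Fin d → ℤ) := Finset.Icc (fun _ => -M) (fun _ => M) with hIdef
    set C : (Fin d → ℤ) → EuclideanSpace ℝ (Fin d) :=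
      fun k => WithLp.toLp 2 (fun i => cl (x i + (s/4) * (k i : ℝ))) with hCdef
    clear_value I
    set Bx : (Fin d → ℤ) → Set (EuclideanSpace ℝ (Fin d)) :=
      fun k => box (C k) (s/4) with hBxdef
    clear_value Bx
    -- the inclusion of the bad event in a finite union of empty-box events
    have hincl : {ω | ¬ ContainsWall (P ω) (box 0 (n:ℝ)) x a b} ⊆
        ⋃ k ∈ I, {ω | (P ω ∩ Bx k).ncard = 0} := by
      intro ω hω
      simp only [mem_setOf_eq, ContainsWall] at hω
      push_neg at hω
      obtain ⟨p₁, hp₁f, p₂, hp₂m, hE⟩ := hω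
      obtain ⟨hp₂K, hp₂f⟩ := hp₂m
      have hp₁a : ∀ i, |p₁ i - x i| ≤ a := (frontier_box_subset_s13 x a hp₁f).1
      have hp₂b : ∀ i, |p₂ i - x i| ≤ b := (frontier_box_subset_s13 x b hp₂f).1
      obtain ⟨i₀, hi₀⟩ := (frontier_box_subset_s13 x b hp₂f).2
      set k : Fin d → ℤ := fun i => round ((p₂ i - x i)/(s/2)) with hkdef
      clear_value k
      have hkabs : ∀ i, |(k i : ℝ)| ≤ 40*σ + 1/2 := by
        intro i
        set t : ℝ := (p₂ i - x i)/(s/2) with htdef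
        have ht : |t| ≤ 40*σ := by
          rw [htdef, abs_div, abs_of_pos (by positivity : (0:ℝ) < s/2),
            div_le_iff₀ (by positivity : (0:ℝ) < s/2)]
          calc |p₂ i - x i| ≤ b := hp₂b i
          _ = 40*σ*(s/2) := by rw [hsdef]; field_simp; ring
        have hround : |t - (round t : ℝ)| ≤ 1/2 := abs_sub_round t
        have hki : (k i : ℝ) = ((round t : ℤ) : ℝ) := by rw [hkdef, htdef]
        have habs : |(k i : ℝ)| ≤ |(k i : ℝ) - t| + |t| := by
          have := abs_add_le ((k i : ℝ) - t) t
          simpa using this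
        have : |(k i : ℝ) - t| = |t - (round t : ℝ)| := by
          rw [hki, abs_sub_comm]
        linarith
      have hkI : k ∈ I := by
        rw [hIdef, Finset.mem_Icc]
        have hMr : (40*σ:ℝ) + 1/2 < ((M:ℤ):ℝ) := by
          rw [hMdef]; push_cast; linarith
        constructor <;> rw [Pi.le_def] <;> intro i
        · have h := (abs_le.mp (hkabs i)).1
          have : -((M:ℤ):ℝ) ≤ ((k i : ℤ):ℝ) := by linarith
          exact_mod_cast this
        · have h := (abs_le.mp (hkabs i)).2
          have : ((k i : ℤ):ℝ) ≤ ((M:ℤ):ℝ) := by linarith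
          exact_mod_cast this
      have hmem : ω ∈ {ω | (P ω ∩ Bx k).ncard = 0} := by
        have hempty : P ω ∩ Bx k = ∅ := by
          rw [Set.eq_empty_iff_forall_notMem]
          rintro y ⟨hyP, hyB⟩
          set m : EuclideanSpace ℝ (Fin d) := midpoint ℝ x p₂ with hmdef
          have hmi : ∀ i, m i = (x i + p₂ i)/2 := by
            intro i; rw [hmdef, midpoint_eq_smul_add]
            simp [PiLp.smul_apply, PiLp.add_apply]; ring
          have hyC : ∀ i, |y i - C k i| ≤ s/4 := by
            intro i
            have := hyB
            rw [hBxdef] at this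
            exact this i
          have hym : ∀ i, |y i - m i| ≤ s := by
            intro i
            have h1 : |C k i - cl (m i)| ≤ s/8 := by
              have hlip := hcl_lip (x i + (s/4) * (k i : ℝ)) (m i)
              have hC : C k i = cl (x i + (s/4) * (k i : ℝ)) := by rw [hCdef]
              have harg : x i + (s/4)*(k i : ℝ) - m i
                  = (s/4) * ((k i:ℝ) - (p₂ i - x i)/(s/2)) := by
                rw [hmi i]; field_simp; ring
              have hround : |(k i:ℝ) - (p₂ i - x i)/(s/2)| ≤ 1/2 := by
                have := abs_sub_round ((p₂ i - x i)/(s/2))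
                have hki : (k i : ℝ) = ((round ((p₂ i - x i)/(s/2)) : ℤ) : ℝ) := by rw [hkdef]
                rw [hki, abs_sub_comm]; exact this
              have : |x i + (s/4)*(k i : ℝ) - m i| ≤ s/8 := by
                rw [harg, abs_mul, abs_of_pos (by positivity : (0:ℝ) < s/4)]
                nlinarith [abs_nonneg ((k i:ℝ) - (p₂ i - x i)/(s/2))]
              rw [hC]; linarith [hlip, this]
            have hmn : |m i| ≤ (n:ℝ) := by
              have h2 : |p₂ i| ≤ (n:ℝ) := by simpa using hp₂K i
              have h3 := hx i
              have habs2 : |(x i + p₂ i)/2| = |x i + p₂ i|/2 := by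
                rw [abs_div, abs_two]
              have htri := abs_add_le (x i) (p₂ i)
              rw [hmi i, habs2]; linarith
            have h2 : |cl (m i) - m i| ≤ s/2 := hcl_close (m i) hmn
            have h3 : |y i - m i| ≤ |y i - C k i| + |C k i - m i| := abs_sub_le _ _ _
            have h4 : |C k i - m i| ≤ |C k i - cl (m i)| + |cl (m i) - m i| := abs_sub_le _ _ _
            linarith [hyC i]
          -- membership in K
          have hyK : y ∈ box 0 (n:ℝ) := by
            intro i
            have h1 : |C k i| ≤ L := by
              rw [hCdef]; exact hcl_bound _
            have h2 : |y i| ≤ |y i - C k i| + |C k i| := by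
              have := abs_add_le (y i - C k i) (C k i); simpa using this
            have : |y i| ≤ (n:ℝ) := by
              rw [hLdef] at h1; linarith [hyC i, hs0.le]
            simpa using this
          have hybb : y ∈ box x b := by
            intro i
            have h3 : |m i - x i| ≤ b/2 := by
              have heq : m i - x i = (p₂ i - x i)/2 := by rw [hmi i]; ring
              rw [heq, abs_div]; simp only [abs_two]
              linarith [hp₂b i]
            calc |y i - x i| ≤ |y i - m i| + |m i - x i| := abs_sub_le _ _ _
            _ ≤ s + b/2 := add_le_add (hym i) h3
            _ ≤ b := by linarith
          have hyba : y ∉ box x a := by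
            intro hmem
            have h1 := hmem i₀
            have heq : m i₀ - x i₀ = (p₂ i₀ - x i₀)/2 := by rw [hmi i₀]; ring
            have h2 : b/2 ≤ |m i₀ - x i₀| := by
              rw [heq, abs_div]; simp only [abs_two]
              linarith [hi₀]
            have h3 : |m i₀ - x i₀| ≤ |m i₀ - y i₀| + |y i₀ - x i₀| := abs_sub_le _ _ _
            have h4 : |m i₀ - y i₀| = |y i₀ - m i₀| := abs_sub_comm _ _
            have h5 : 10*(σ*a₀) + 10*σ ≤ b := by
              have : B₀ = 10*(σ*a₀) + 10*σ := by rw [hB₀def]; ring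
              linarith
            have h6 : a₀ ≤ σ*a₀ := le_mul_of_one_le_left ha₀.le hσ1
            have h7 : (1:ℝ) ≤ σ := hσ1
            linarith [hym i₀]
          -- Euclidean distances
          have hD : b ≤ dist x p₂ := by
            have := coord_le_dist x p₂ i₀
            rw [abs_sub_comm] at this
            linarith [hi₀]
          have hxp₁ : dist x p₁ ≤ σ * a := by
            rw [hσdef]
            exact dist_le_of_coord_le ha.le (fun i => by rw [abs_sub_comm]; exact hp₁a i)
          have hym2 : dist y m ≤ σ * s := by
            rw [hσdef]; exact dist_le_of_coord_le hs0.le hym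
          have hnorm2 : ‖(2:ℝ)‖ = 2 := by norm_num
          have hmp₂ : dist m p₂ = dist x p₂ / 2 := by
            rw [hmdef, dist_midpoint_right, hnorm2]; ring
          have hmx : dist m x = dist x p₂ / 2 := by
            rw [hmdef, dist_midpoint_left, hnorm2]; ring
          have hr : dist x p₂ - σ*a ≤ dist p₁ p₂ := by
            have := dist_triangle x p₁ p₂; linarith
          have haa' : σ*a ≤ σ*a₀ := mul_le_mul_of_nonneg_left haa₀ hσ0.le
          have hbig : 10*(σ*a₀) + 10*σ ≤ b := by
            have : B₀ = 10*(σ*a₀) + 10*σ := by rw [hB₀def]; ring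
            linarith
          have hA₀ : (0:ℝ) ≤ σ*a₀ := mul_nonneg hσ0.le ha₀.le
          have key2 : σ*s + dist x p₂ / 2 ≤ 3 * dist p₁ p₂ / 4 := by
            linarith [hD, hr, haa', hbig, hσs, hσ0.le]
          have key1 : σ*s + dist x p₂/2 + σ*a ≤ 3 * dist p₁ p₂ / 4 := by
            linarith [hD, hr, haa', hbig, hσs, hσ0.le]
          have hyp₂ : dist y p₂ ≤ 3 * dist p₁ p₂ / 4 := by
            calc dist y p₂ ≤ dist y m + dist m p₂ := dist_triangle _ _ _
            _ ≤ σ*s + dist x p₂/2 := by rw [hmp₂]; linarith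
            _ ≤ _ := key2
          have hyp₁ : dist y p₁ ≤ 3 * dist p₁ p₂ / 4 := by
            calc dist y p₁ ≤ dist y m + dist m x + dist x p₁ := dist_triangle4 _ _ _ _
            _ ≤ σ*s + dist x p₂/2 + σ*a := by rw [hmx]; linarith
            _ ≤ _ := key1
          have hy : y ∈ (box 0 (n:ℝ) ∩ P ω ∩ closedBall p₁ (3 * dist p₁ p₂ / 4) ∩
              closedBall p₂ (3 * dist p₁ p₂ / 4) ∩ (box x b \ box x a)) :=
            ⟨⟨⟨⟨hyK, hyP⟩, mem_closedBall.mpr hyp₁⟩, mem_closedBall.mpr hyp₂⟩, hybb, hyba⟩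
          rw [hE] at hy
          exact hy
        simp [hempty]
      exact Set.mem_biUnion hkI hmem
    -- volume of the small boxes
    have hvol : ∀ k : Fin d → ℤ, volume (Bx k) = (ENNReal.ofReal (s/2))^d := by
      intro k
      rw [hBxdef]
      rw [volume_box (C k) (by positivity : (0:ℝ) ≤ s/4)]
      congr 1
      ring_nf
    have hvolne : ∀ k : Fin d → ℤ, volume (Bx k) ≠ ⊤ := by
      intro k; rw [hvol k]; exact ENNReal.pow_ne_top ENNReal.ofReal_ne_top
    have htr : ∀ k : Fin d → ℤ, (volume (Bx k)).toReal = c' * b^d := by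
      intro k
      rw [hvol k, ← ENNReal.ofReal_pow (by positivity : (0:ℝ) ≤ s/2)]
      rw [ENNReal.toReal_ofReal (by positivity)]
      rw [hc'def, ← mul_pow]
      congr 1
      rw [hsdef, div_div]; ring
    have hprob : ∀ k : Fin d → ℤ, Pr {ω | (P ω ∩ Bx k).ncard = 0}
        = ENNReal.ofReal (Real.exp (-(c' * b^d))) := by
      intro k
      have h := (hP.2 1 (fun _ => Bx k) (fun _ => by rw [hBxdef]; exact measurableSet_box _ _)
        Subsingleton.pairwise).2 0 (hvolne k) 0
      simp only [pow_zero, Nat.factorial_zero, Nat.cast_one, div_one, mul_one,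
        Nat.cast_zero] at h
      rw [htr k] at h
      exact h
    calc Pr {ω | ¬ ContainsWall (P ω) (box 0 (n:ℝ)) x a b}
        ≤ Pr (⋃ k ∈ I, {ω | (P ω ∩ Bx k).ncard = 0}) := measure_mono hincl
    _ ≤ ∑ k ∈ I, Pr {ω | (P ω ∩ Bx k).ncard = 0} := measure_biUnion_finset_le _ _
    _ = I.card • ENNReal.ofReal (Real.exp (-(c' * b^d))) := by
        rw [Finset.sum_congr rfl fun k _ => hprob k, Finset.sum_const]
    _ ≤ ENNReal.ofReal (c * Real.exp (-c' * b^d)) := by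
        rw [nsmul_eq_mul]
        have hcard : (I.card : ℝ) ≤ (80*(d:ℝ)+3)^d := by
          rw [hIdef, Pi.card_Icc]
          have hone : ∀ _i : Fin d, (Finset.Icc (-M) M).card = 80*d+3 := by
            intro _i
            rw [Int.card_Icc, hMdef]
            omega
          rw [Finset.prod_congr rfl fun i _ => hone i, Finset.prod_const]
          push_cast
          simp [Finset.card_univ]
        have heq : (I.card : ENNReal) * ENNReal.ofReal (Real.exp (-(c'*b^d)))
            = ENNReal.ofReal ((I.card:ℝ) * Real.exp (-(c'*b^d))) := by
          rw [ENNReal.ofReal_mul (Nat.cast_nonneg _), ENNReal.ofReal_natCast]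
        rw [heq]
        apply ENNReal.ofReal_le_ofReal
        have hneg : -(c'*b^d) = -c' * b^d := by ring
        rw [hneg]
        have hcge : (80*(d:ℝ)+3)^d ≤ c := by
          rw [hcdef]; linarith [Real.exp_pos (c'*B₀^d)]
        exact mul_le_mul_of_nonneg_right (hcard.trans hcge) (Real.exp_nonneg _)
end

section
/- Let X₁,…,X_n be independent random variables defined on a probability space (Ω,𝒜,P) taking values in a measurable space (𝒳,𝒮), and let f : 𝒳ⁿ → ℝ be a bounded measurable function. Then for any pairwise disjoint subsets A₁,…,A_k of {1,…,n}, Var(f(X₁,…,X_n)) ≥ Σ_{i=1}^k Var(E[f(X₁,…,X_n) | {X_j}_{j∈A_i}]). -/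
open MeasureTheory ProbabilityTheory

private lemma mul_memL2_integrable {Ω : Type*} [MeasurableSpace Ω] {Pr : Measure Ω}
    {u v : Ω → ℝ} (hu : MemLp u 2 Pr) (hv : MemLp v 2 Pr) :
    Integrable (fun ω => u ω * v ω) Pr := by
  refine Integrable.mono' (((hu.integrable_sq).add (hv.integrable_sq)).const_mul (1/2))
    (hu.aestronglyMeasurable.mul hv.aestronglyMeasurable) (ae_of_all _ fun ω => ?_)
  simp only [Pi.add_apply, Real.norm_eq_abs, abs_mul]
  nlinarith [sq_nonneg (|u ω| - |v ω|), sq_abs (u ω), sq_abs (v ω), abs_nonneg (u ω),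
    abs_nonneg (v ω)]

private lemma aux_sum_var_le
    {Ω : Type*} [mΩ : MeasurableSpace Ω] (Pr : Measure Ω) [IsProbabilityMeasure Pr]
    (Y : Ω → ℝ) (hYmeas : Measurable Y) (B : ℝ) (hYbd : ∀ ω, |Y ω| ≤ B)
    {k : ℕ} (m : Fin k → MeasurableSpace Ω) (hm : ∀ i, m i ≤ mΩ)
    (hIndep : ∀ i l, i ≠ l → Indep (m i) (m l) Pr) :
    ∑ i : Fin k, variance (Pr[Y | m i]) Pr ≤ variance Y Pr := by
  have hY2 : MemLp Y 2 Pr :=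
    (memLp_top_of_bound hYmeas.aestronglyMeasurable B
      (ae_of_all _ fun ω => by simpa [Real.norm_eq_abs] using hYbd ω)).mono_exponent
      le_top
  have hYint : Integrable Y Pr := hY2.integrable one_le_two
  set μ₀ : ℝ := ∫ ω, Y ω ∂Pr with hμ₀
  set Z : Fin k → Ω → ℝ := fun i => Pr[Y | m i] with hZdef
  have hZint : ∀ i, Integrable (Z i) Pr := fun i => integrable_condExp
  have hZsm : ∀ i, StronglyMeasurable[m i] (Z i) := fun i => stronglyMeasurable_condExp
  have hZbd : ∀ i, ∀ᵐ ω ∂Pr, ‖Z i ω‖ ≤ B := by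
    intro i
    have hub : Z i ≤ᵐ[Pr] fun _ => B := by
      have h := condExp_mono (m := m i) (μ := Pr) hYint (integrable_const B)
        (ae_of_all _ fun ω => (abs_le.1 (hYbd ω)).2)
      rwa [condExp_const (hm i)] at h
    have hlb : (fun _ : Ω => -B) ≤ᵐ[Pr] Z i := by
      have h := condExp_mono (m := m i) (μ := Pr) (integrable_const (-B)) hYint
        (ae_of_all _ fun ω => (abs_le.1 (hYbd ω)).1)
      rwa [condExp_const (hm i)] at h
    filter_upwards [hub, hlb] with ω h1 h2
    rw [Real.norm_eq_abs, abs_le]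
    exact ⟨h2, h1⟩
  have hZ2 : ∀ i, MemLp (Z i) 2 Pr := fun i =>
    (memLp_top_of_bound ((hZsm i).mono (hm i)).aestronglyMeasurable B
      (hZbd i)).mono_exponent le_top
  have hZmean : ∀ i, ∫ ω, Z i ω ∂Pr = μ₀ := fun i => integral_condExp (hm i)
  -- centered versions
  have hW2 : ∀ i, MemLp (fun ω => Z i ω - μ₀) 2 Pr := fun i => (hZ2 i).sub (memLp_const μ₀)
  have hG2 : MemLp (fun ω => Y ω - μ₀) 2 Pr := hY2.sub (memLp_const μ₀)
  have hWint : ∀ i, Integrable (fun ω => Z i ω - μ₀) Pr := fun i => (hW2 i).integrable one_le_two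
  have hGint : Integrable (fun ω => Y ω - μ₀) Pr := hG2.integrable one_le_two
  have hWmean : ∀ i, ∫ ω, (Z i ω - μ₀) ∂Pr = 0 := by
    intro i
    rw [integral_sub (hZint i) (integrable_const μ₀), hZmean i, integral_const]
    simp
  -- the key conditional-expectation identity
  have key1 : ∀ i, ∫ ω, (Z i ω - μ₀) * (Y ω - μ₀) ∂Pr
      = ∫ ω, (Z i ω - μ₀) * (Z i ω - μ₀) ∂Pr := by
    intro i
    have hWm : StronglyMeasurable[m i] (fun ω => Z i ω - μ₀) :=
      (hZsm i).sub stronglyMeasurable_const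
    have hWG : Integrable ((fun ω => Z i ω - μ₀) * fun ω => Y ω - μ₀) Pr :=
      mul_memL2_integrable (hW2 i) hG2
    have h1 := condExp_mul_of_stronglyMeasurable_left (μ := Pr) hWm hWG hGint
    have h2 : MeasureTheory.condExp (m i) Pr (fun ω => Y ω - μ₀) =ᵐ[Pr] fun ω => Z i ω - μ₀ := by
      have h3 := condExp_sub (m := m i) (μ := Pr) hYint (integrable_const μ₀)
      rw [condExp_const (hm i)] at h3
      exact h3
    calc ∫ ω, (Z i ω - μ₀) * (Y ω - μ₀) ∂Pr
        = ∫ ω, MeasureTheory.condExp (m i) Pr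
            ((fun ω => Z i ω - μ₀) * fun ω => Y ω - μ₀) ω ∂Pr :=
          (integral_condExp (hm i)).symm
      _ = ∫ ω, (Z i ω - μ₀) * (Z i ω - μ₀) ∂Pr := by
          refine integral_congr_ae ?_
          filter_upwards [h1, h2] with ω e1 e2
          rw [e1, Pi.mul_apply, e2]
  -- orthogonality of the blocks
  have key2 : ∀ i l, i ≠ l → ∫ ω, (Z i ω - μ₀) * (Z l ω - μ₀) ∂Pr = 0 := by
    intro i l hil
    have hWm : ∀ j, StronglyMeasurable[m j] (fun ω => Z j ω - μ₀) := fun j =>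
      (hZsm j).sub stronglyMeasurable_const
    have hind : IndepFun (fun ω => Z i ω - μ₀) (fun ω => Z l ω - μ₀) Pr := by
      rw [IndepFun_iff_Indep]
      exact indep_of_indep_of_le_left
        (indep_of_indep_of_le_right (hIndep i l hil) (hWm l).measurable.comap_le)
        (hWm i).measurable.comap_le
    have h := IndepFun.integral_fun_mul_eq_mul_integral hind (hWint i).aestronglyMeasurable (hWint l).aestronglyMeasurable
    calc ∫ ω, (Z i ω - μ₀) * (Z l ω - μ₀) ∂Pr
        = (∫ ω, (Z i ω - μ₀) ∂Pr) * ∫ ω, (Z l ω - μ₀) ∂Pr := h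
      _ = 0 := by rw [hWmean i, hWmean l, mul_zero]
  -- sums
  have hS2 : MemLp (fun ω => ∑ i, (Z i ω - μ₀)) 2 Pr :=
    memLp_finsetSum _ fun i _ => hW2 i
  have hGS_int : Integrable (fun ω => (Y ω - μ₀) * ∑ i, (Z i ω - μ₀)) Pr :=
    mul_memL2_integrable hG2 hS2
  have hSS_int : Integrable (fun ω => (∑ i, (Z i ω - μ₀)) * ∑ i, (Z i ω - μ₀)) Pr :=
    mul_memL2_integrable hS2 hS2
  have hGG_int : Integrable (fun ω => (Y ω - μ₀) * (Y ω - μ₀)) Pr :=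
    mul_memL2_integrable hG2 hG2
  have E1 : ∫ ω, (Y ω - μ₀) * ∑ i, (Z i ω - μ₀) ∂Pr
      = ∑ i, ∫ ω, (Z i ω - μ₀) * (Z i ω - μ₀) ∂Pr := by
    calc ∫ ω, (Y ω - μ₀) * ∑ i, (Z i ω - μ₀) ∂Pr
        = ∫ ω, ∑ i, (Z i ω - μ₀) * (Y ω - μ₀) ∂Pr := by
          refine integral_congr_ae (ae_of_all _ fun ω => ?_)
          simp only [Finset.mul_sum]
          exact Finset.sum_congr rfl fun i _ => mul_comm _ _
      _ = ∑ i, ∫ ω, (Z i ω - μ₀) * (Y ω - μ₀) ∂Pr :=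
          integral_finset_sum _ fun i _ => mul_memL2_integrable (hW2 i) hG2
      _ = ∑ i, ∫ ω, (Z i ω - μ₀) * (Z i ω - μ₀) ∂Pr :=
          Finset.sum_congr rfl fun i _ => key1 i
  have E2 : ∫ ω, (∑ i, (Z i ω - μ₀)) * ∑ i, (Z i ω - μ₀) ∂Pr
      = ∑ i, ∫ ω, (Z i ω - μ₀) * (Z i ω - μ₀) ∂Pr := by
    calc ∫ ω, (∑ i, (Z i ω - μ₀)) * ∑ i, (Z i ω - μ₀) ∂Pr
        = ∫ ω, ∑ i, ∑ l, (Z i ω - μ₀) * (Z l ω - μ₀) ∂Pr := by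
          refine integral_congr_ae (ae_of_all _ fun ω => ?_)
          simp only [Finset.sum_mul_sum]
      _ = ∑ i, ∫ ω, ∑ l, (Z i ω - μ₀) * (Z l ω - μ₀) ∂Pr :=
          integral_finset_sum _ fun i _ =>
            integrable_finset_sum _ fun l _ => mul_memL2_integrable (hW2 i) (hW2 l)
      _ = ∑ i, ∑ l, ∫ ω, (Z i ω - μ₀) * (Z l ω - μ₀) ∂Pr :=
          Finset.sum_congr rfl fun i _ =>
            integral_finset_sum _ fun l _ => mul_memL2_integrable (hW2 i) (hW2 l)
      _ = ∑ i, ∫ ω, (Z i ω - μ₀) * (Z i ω - μ₀) ∂Pr := by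
          refine Finset.sum_congr rfl fun i _ => ?_
          exact Finset.sum_eq_single i (fun l _ hl => key2 i l (Ne.symm hl)) (by simp)
  have expand : ∫ ω, (Y ω - μ₀ - ∑ i, (Z i ω - μ₀))^2 ∂Pr
      = ∫ ω, (Y ω - μ₀) * (Y ω - μ₀) ∂Pr
        - ∑ i, ∫ ω, (Z i ω - μ₀) * (Z i ω - μ₀) ∂Pr := by
    have hptw : ∀ ω : Ω, (Y ω - μ₀ - ∑ i, (Z i ω - μ₀))^2
        = (Y ω - μ₀) * (Y ω - μ₀) - 2 * ((Y ω - μ₀) * ∑ i, (Z i ω - μ₀))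
          + (∑ i, (Z i ω - μ₀)) * ∑ i, (Z i ω - μ₀) := fun ω => by ring
    calc ∫ ω, (Y ω - μ₀ - ∑ i, (Z i ω - μ₀))^2 ∂Pr
        = ∫ ω, ((Y ω - μ₀) * (Y ω - μ₀) - 2 * ((Y ω - μ₀) * ∑ i, (Z i ω - μ₀))
            + (∑ i, (Z i ω - μ₀)) * ∑ i, (Z i ω - μ₀)) ∂Pr :=
          integral_congr_ae (ae_of_all _ hptw)
      _ = (∫ ω, (Y ω - μ₀) * (Y ω - μ₀) ∂Pr
            - ∫ ω, 2 * ((Y ω - μ₀) * ∑ i, (Z i ω - μ₀)) ∂Pr)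
          + ∫ ω, (∑ i, (Z i ω - μ₀)) * ∑ i, (Z i ω - μ₀) ∂Pr := by
          have h2int : Integrable (fun ω => 2 * ((Y ω - μ₀) * ∑ i, (Z i ω - μ₀))) Pr :=
            hGS_int.const_mul 2
          have hfirst : Integrable (fun ω => (Y ω - μ₀) * (Y ω - μ₀)
              - 2 * ((Y ω - μ₀) * ∑ i, (Z i ω - μ₀))) Pr := hGG_int.sub h2int
          rw [integral_add hfirst hSS_int, integral_sub hGG_int h2int]
      _ = ∫ ω, (Y ω - μ₀) * (Y ω - μ₀) ∂Pr
            - ∑ i, ∫ ω, (Z i ω - μ₀) * (Z i ω - μ₀) ∂Pr := by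
          rw [integral_const_mul, E1, E2]
          ring
  have h0 : (0:ℝ) ≤ ∫ ω, (Y ω - μ₀ - ∑ i, (Z i ω - μ₀))^2 ∂Pr :=
    integral_nonneg fun ω => sq_nonneg _
  have hmain : ∑ i, ∫ ω, (Z i ω - μ₀) * (Z i ω - μ₀) ∂Pr
      ≤ ∫ ω, (Y ω - μ₀) * (Y ω - μ₀) ∂Pr := by linarith [expand ▸ h0]
  have hvarY : variance Y Pr = ∫ ω, (Y ω - μ₀) * (Y ω - μ₀) ∂Pr := by
    rw [variance_eq_integral hY2.aestronglyMeasurable.aemeasurable]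
    refine integral_congr_ae (ae_of_all _ fun ω => ?_)
    simp only [Pi.pow_apply, Pi.sub_apply, ← hμ₀]
    ring
  have hvarZ : ∀ i, variance (Z i) Pr = ∫ ω, (Z i ω - μ₀) * (Z i ω - μ₀) ∂Pr := by
    intro i
    rw [variance_eq_integral (hZ2 i).aestronglyMeasurable.aemeasurable]
    refine integral_congr_ae (ae_of_all _ fun ω => ?_)
    simp only [Pi.pow_apply, Pi.sub_apply]
    rw [show ∫ x, Z i x ∂Pr = μ₀ from hZmean i]
    ring
  calc ∑ i : Fin k, variance (Z i) Pr
      = ∑ i, ∫ ω, (Z i ω - μ₀) * (Z i ω - μ₀) ∂Pr :=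
        Finset.sum_congr rfl fun i _ => hvarZ i
    _ ≤ ∫ ω, (Y ω - μ₀) * (Y ω - μ₀) ∂Pr := hmain
    _ = variance Y Pr := hvarY.symm

/-- **Sub-additivity of the variance over conditional expectations on disjoint blocks
of independent variables** (Chatterjee–Sen, Lemma 7.1).  If `X₁,…,Xₙ` are independent
random variables and `f` is bounded measurable, then for pairwise disjoint subsets
`A₁,…,A_k` of the index set,
`Var(f(X₁,…,Xₙ)) ≥ ∑ᵢ Var(E[f(X₁,…,Xₙ) | {X_j}_{j∈Aᵢ}])`. -/
theorem variance_ge_sum_conditional_variances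
    {Ω : Type*} [MeasurableSpace Ω] (Pr : Measure Ω) [IsProbabilityMeasure Pr]
    {𝒳 : Type*} [MeasurableSpace 𝒳] {n : ℕ}
    (X : Fin n → Ω → 𝒳) (hXm : ∀ i, Measurable (X i))
    (hindep : iIndepFun X Pr)
    (f : (Fin n → 𝒳) → ℝ) (hf : Measurable f)
    (hbdd : ∃ B : ℝ, ∀ v, |f v| ≤ B)
    {k : ℕ} (A : Fin k → Set (Fin n))
    (hdisj : Pairwise (Function.onFun Disjoint A)) :
    ∑ i : Fin k,
        variance
          (Pr[(fun ω => f (fun j => X j ω)) |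
            MeasurableSpace.comap (fun ω (j : A i) => X (j : Fin n) ω) inferInstance])
          Pr ≤
      variance (fun ω => f (fun j => X j ω)) Pr := by
  obtain ⟨B, hB⟩ := hbdd
  have hYmeas : Measurable fun ω => f fun j => X j ω :=
    hf.comp (measurable_pi_lambda _ fun j => hXm j)
  have h_eq : ∀ i : Fin k,
      MeasurableSpace.comap (fun ω (j : A i) => X (j : Fin n) ω) inferInstance
        = ⨆ j ∈ A i, MeasurableSpace.comap (X j) inferInstance := by
    intro i
    have hpi : (inferInstance : MeasurableSpace ((j : A i) → 𝒳))
        = ⨆ j : A i, MeasurableSpace.comap (fun g : (j : A i) → 𝒳 => g j) inferInstance := rfl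
    rw [hpi, MeasurableSpace.comap_iSup]
    simp_rw [MeasurableSpace.comap_comp, Function.comp_def]
    exact iSup_subtype'' (A i) fun j => MeasurableSpace.comap (X j) inferInstance
  have hind : ∀ i l : Fin k, i ≠ l →
      Indep (MeasurableSpace.comap (fun ω (j : A i) => X (j : Fin n) ω) inferInstance)
        (MeasurableSpace.comap (fun ω (j : A l) => X (j : Fin n) ω) inferInstance) Pr := by
    intro i l hil
    rw [h_eq i, h_eq l]
    exact indep_iSup_of_disjoint (fun j => (hXm j).comap_le)
      ((iIndepFun_iff_iIndep _ _ _).mp hindep) (hdisj hil)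
  exact aux_sum_var_le Pr _ hYmeas B (fun ω => hB _)
    (fun i => MeasurableSpace.comap (fun ω (j : A i) => X (j : Fin n) ω) inferInstance)
    (fun i => (measurable_pi_lambda (fun ω (j : A i) => X (j : Fin n) ω)
      fun j => hXm (j : Fin n)).comap_le) hind
end

section
/- Let S be a set and let R be a finite nonempty subset of S. Suppose there is a positive integer k such that: (I) for every r ∈ R there exist an integer m_r ≥ 3 and pairwise disjoint subsets C_r^{(1)},…,C_r^{(m_r)} of S satisfying r ∉ C_r^{(i)} and |C_r^{(i)}| ≥ k for all i ≤ m_r; and (II) for all distinct r, r' ∈ R, either (IIa) (⋃_{j≤m_r} C_r^{(j)} ∪ {r}) ∩ (⋃_{i≤m_{r'}} C_{r'}^{(i)} ∪ {r'}) = ∅, or (IIb) there exist i₀ ≤ m_{r'} and j₀ ≤ m_r such that (⋃_{j≤m_r} C_r^{(j)} ∪ {r}) \ C_r^{(j₀)} ⊆ C_{r'}^{(i₀)} and (⋃_{i≤m_{r'}} C_{r'}^{(i)} ∪ {r'}) \ C_{r'}^{(i₀)} ⊆ C_r^{(j₀)}. Then |S| ≥ k|R|. -/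
open Set

private lemma bk_aux {α : Type*} : ∀ (n : ℕ) (S R : Set α), R.ncard ≤ n → R ⊆ S → S.Finite →
    ∀ (k : ℕ) (m : α → ℕ) (C : α → ℕ → Set α),
    (∀ r ∈ R, 3 ≤ m r) →
    (∀ r ∈ R, ∀ i < m r, r ∉ C r i ∧ C r i ⊆ S) →
    (∀ r ∈ R, ∀ i < m r, (k : ℕ∞) ≤ (C r i).encard) →
    (∀ r ∈ R, ∀ i < m r, ∀ j < m r, i ≠ j → Disjoint (C r i) (C r j)) →
    (∀ r ∈ R, ∀ r' ∈ R, r ≠ r' →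
      Disjoint ((⋃ j < m r, C r j) ∪ {r}) ((⋃ i < m r', C r' i) ∪ {r'}) ∨
      ∃ i₀ < m r', ∃ j₀ < m r,
        ((⋃ j < m r, C r j) ∪ {r}) \ C r j₀ ⊆ C r' i₀ ∧
        ((⋃ i < m r', C r' i) ∪ {r'}) \ C r' i₀ ⊆ C r j₀) →
    (k : ℕ∞) * R.encard ≤ S.encard := by
  intro n
  induction n with
  | zero =>
    intro S R hcard hRS hSfin k m C _ _ _ _ _
    have hRfin : R.Finite := hSfin.subset hRS
    have : R = ∅ := by
      rw [← Set.ncard_eq_zero hRfin]; omega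
    simp [this]
  | succ n ih =>
    intro S R hcard hRS hSfin k m C hIa hIb hIc hdisj hII
    classical
    rcases R.eq_empty_or_nonempty with hRe | hRne
    · simp [hRe]
    have hRfin : R.Finite := hSfin.subset hRS
    obtain ⟨r0, hr0⟩ := hRne
    -- find the branch of minimal cardinality
    have hP : ∃ N, ∃ r ∈ R, ∃ j, j < m r ∧ (C r j).ncard = N :=
      ⟨(C r0 0).ncard, r0, hr0, 0, by have := hIa r0 hr0; omega, rfl⟩
    obtain ⟨r, hrR, js, hjs, hval⟩ := Nat.find_spec hP
    have hmin : ∀ r' ∈ R, ∀ i < m r', (C r js).ncard ≤ (C r' i).ncard := by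
      intro r' hr' i hi
      rw [hval]
      by_contra h
      exact Nat.find_min hP (by omega) ⟨r', hr', i, hi, rfl⟩
    -- membership in blobs
    have hmemB : ∀ r' x j, j < m r' → x ∈ C r' j →
        x ∈ (⋃ j < m r', C r' j) ∪ {r'} := by
      intro r' x j hj hx
      exact Or.inl (Set.mem_biUnion hj hx)
    have hselfB : ∀ r' : α, r' ∈ (⋃ j < m r', C r' j) ∪ {r'} := fun r' => Or.inr rfl
    -- the minimal branch contains no point of R
    have hfree : ∀ r' ∈ R, r' ∉ C r js := by
      intro r' hr' hmem
      have hner : r ≠ r' := fun h => (hIb r hrR js hjs).1 (h ▸ hmem)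
      rcases hII r hrR r' hr' hner with hd | ⟨i₀, hi₀, j₀, hj₀, h1, h2⟩
      · exact Set.disjoint_left.1 hd (hmemB r r' js hjs hmem) (hselfB r')
      · have hr'j₀ : r' ∈ C r j₀ := h2 ⟨hselfB r', (hIb r' hr' i₀ hi₀).1⟩
        have hj₀eq : j₀ = js := by
          by_contra hne
          exact Set.disjoint_left.1 (hdisj r hrR j₀ hj₀ js hjs hne) hr'j₀ hmem
        set i₁ := if i₀ = 0 then 1 else 0 with hi₁def
        have hi₁m : i₁ < m r' := by
          have := hIa r' hr'; simp only [hi₁def]; split <;> omega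
        have hi₁ne : i₁ ≠ i₀ := by simp only [hi₁def]; split <;> omega
        have hsub : C r' i₁ ⊆ C r js \ {r'} := by
          intro x hx
          refine ⟨?_, ?_⟩
          · have : x ∈ ((⋃ i < m r', C r' i) ∪ {r'}) \ C r' i₀ :=
              ⟨hmemB r' x i₁ hi₁m hx,
               Set.disjoint_left.1 (hdisj r' hr' i₁ hi₁m i₀ hi₀ hi₁ne) hx⟩
            have := h2 this
            rwa [hj₀eq] at this
          · intro hxr
            have hxe : x = r' := Set.mem_singleton_iff.1 hxr
            exact (hIb r' hr' i₁ hi₁m).1 (hxe ▸ hx)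
        have hfin : (C r js).Finite := hSfin.subset (hIb r hrR js hjs).2
        have hlt : (C r' i₁).ncard < (C r js).ncard :=
          lt_of_le_of_lt (Set.ncard_le_ncard hsub hfin.diff)
            (Set.ncard_diff_singleton_lt_of_mem hmem hfin)
        exact absurd (hmin r' hr' i₁ hi₁m) (by omega)
    -- set up the smaller instance
    set X := C r js with hXdef
    have hXS : X ⊆ S := (hIb r hrR js hjs).2
    have hRX : ∀ r' ∈ R, r' ∉ X := hfree
    set S' := S \ X with hS'def
    set R' := R \ {r} with hR'def
    set C' : α → ℕ → Set α := fun r'' i => C r'' i \ X with hC'def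
    have hR'mem : ∀ r', r' ∈ R' → r' ∈ R ∧ r' ≠ r := fun r' h => ⟨h.1, h.2⟩
    -- key: for r' ≠ r in R, relation between branches of r' and X
    have hbranch : ∀ r' ∈ R, r' ≠ r → ∀ i < m r', (k : ℕ∞) ≤ (C' r' i).encard := by
      intro r' hr' hne i hi
      rcases hII r hrR r' hr' (Ne.symm hne) with hd | ⟨i₀, hi₀, j₀, hj₀, h1, h2⟩
      · have hdX : Disjoint (C r' i) X := by
          refine Set.disjoint_left.2 fun x hx hxX => ?_
          exact Set.disjoint_left.1 hd (hmemB r x js hjs hxX) (hmemB r' x i hi hx)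
        show (k : ℕ∞) ≤ (C r' i \ X).encard
        rw [hdX.sdiff_eq_left]
        exact hIc r' hr' i hi
      · have hr'j₀ : r' ∈ C r j₀ := h2 ⟨hselfB r', (hIb r' hr' i₀ hi₀).1⟩
        have hj₀ne : j₀ ≠ js := fun h => hfree r' hr' (by rw [hXdef, ← h]; exact hr'j₀)
        by_cases hii : i = i₀
        · -- find a third branch of r inside C r' i₀, away from X
          obtain ⟨j'', hj''m, hj''1, hj''2⟩ : ∃ j'' , j'' < m r ∧ j'' ≠ j₀ ∧ j'' ≠ js := by
            have h3 := hIa r hrR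
            rcases Nat.lt_or_ge j₀ 3 with _ | _ <;> rcases Nat.lt_or_ge js 3 with _ | _
            all_goals {
              refine ⟨if 0 ≠ j₀ ∧ 0 ≠ js then 0 else if 1 ≠ j₀ ∧ 1 ≠ js then 1 else 2, ?_⟩
              split
              · omega
              · split
                · omega
                · omega }
          have hsub : C r j'' ⊆ C' r' i := by
            intro x hx
            refine ⟨?_, Set.disjoint_left.1 (hdisj r hrR j'' hj''m js hjs hj''2) hx⟩
            rw [hii]
            exact h1 ⟨hmemB r x j'' hj''m hx,
              Set.disjoint_left.1 (hdisj r hrR j'' hj''m j₀ hj₀ hj''1) hx⟩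
          exact le_trans (hIc r hrR j'' hj''m) (Set.encard_le_encard hsub)
        · -- C r' i ⊆ C r j₀, disjoint from X
          have hdX : Disjoint (C r' i) X := by
            refine Set.disjoint_left.2 fun x hx hxX => ?_
            have hxj₀ : x ∈ C r j₀ := h2 ⟨hmemB r' x i hi hx,
              Set.disjoint_left.1 (hdisj r' hr' i hi i₀ hi₀ hii) hx⟩
            exact Set.disjoint_left.1 (hdisj r hrR j₀ hj₀ js hjs hj₀ne) hxj₀ hxX
          show (k : ℕ∞) ≤ (C r' i \ X).encard
          rw [hdX.sdiff_eq_left]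
          exact hIc r' hr' i hi
    -- hypotheses for the smaller instance
    have hRS' : R' ⊆ S' := fun r' hr' => ⟨hRS hr'.1, hRX r' hr'.1⟩
    have hS'fin : S'.Finite := hSfin.subset Set.diff_subset
    have hcard' : R'.ncard ≤ n := by
      have h1 : R'.ncard < R.ncard := Set.ncard_diff_singleton_lt_of_mem hrR hRfin
      omega
    have hIa' : ∀ r' ∈ R', 3 ≤ m r' := fun r' hr' => hIa r' hr'.1
    have hIb' : ∀ r' ∈ R', ∀ i < m r', r' ∉ C' r' i ∧ C' r' i ⊆ S' := by
      intro r' hr' i hi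
      exact ⟨fun h => (hIb r' hr'.1 i hi).1 h.1,
        fun x hx => ⟨(hIb r' hr'.1 i hi).2 hx.1, hx.2⟩⟩
    have hIc' : ∀ r' ∈ R', ∀ i < m r', (k : ℕ∞) ≤ (C' r' i).encard := by
      intro r' hr' i hi
      exact hbranch r' hr'.1 hr'.2 i hi
    have hdisj' : ∀ r' ∈ R', ∀ i < m r', ∀ j < m r', i ≠ j → Disjoint (C' r' i) (C' r' j) :=
      fun r' hr' i hi j hj hij =>
        (hdisj r' hr'.1 i hi j hj hij).mono Set.diff_subset Set.diff_subset
    have hblob'sub : ∀ r', (⋃ j < m r', C' r' j) ∪ {r'} ⊆ (⋃ j < m r', C r' j) ∪ {r'} := by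
      intro r' x hx
      rcases hx with hx | hx
      · simp only [Set.mem_iUnion] at hx
        obtain ⟨j, hj, hxj⟩ := hx
        exact Or.inl (Set.mem_biUnion hj hxj.1)
      · exact Or.inr hx
    have hII' : ∀ r1 ∈ R', ∀ r2 ∈ R', r1 ≠ r2 →
        Disjoint ((⋃ j < m r1, C' r1 j) ∪ {r1}) ((⋃ i < m r2, C' r2 i) ∪ {r2}) ∨
        ∃ i₀ < m r2, ∃ j₀ < m r1,
          ((⋃ j < m r1, C' r1 j) ∪ {r1}) \ C' r1 j₀ ⊆ C' r2 i₀ ∧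
          ((⋃ i < m r2, C' r2 i) ∪ {r2}) \ C' r2 i₀ ⊆ C' r1 j₀ := by
      intro r1 hr1 r2 hr2 hne
      rcases hII r1 hr1.1 r2 hr2.1 hne with hd | ⟨i₀, hi₀, j₀, hj₀, h1, h2⟩
      · exact Or.inl (hd.mono (hblob'sub r1) (hblob'sub r2))
      · refine Or.inr ⟨i₀, hi₀, j₀, hj₀, ?_, ?_⟩
        · intro x ⟨hx1, hx2⟩
          have hxX : x ∉ X := by
            rcases hx1 with hx1 | hx1
            · simp only [Set.mem_iUnion] at hx1
              obtain ⟨j, hj, hxj⟩ := hx1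
              exact hxj.2
            · rw [Set.mem_singleton_iff.1 hx1]
              exact hRX r1 hr1.1
          have hxj₀ : x ∉ C r1 j₀ := fun h => hx2 ⟨h, hxX⟩
          exact ⟨h1 ⟨hblob'sub r1 hx1, hxj₀⟩, hxX⟩
        · intro x ⟨hx1, hx2⟩
          have hxX : x ∉ X := by
            rcases hx1 with hx1 | hx1
            · simp only [Set.mem_iUnion] at hx1
              obtain ⟨j, hj, hxj⟩ := hx1
              exact hxj.2
            · rw [Set.mem_singleton_iff.1 hx1]
              exact hRX r2 hr2.1
          have hxi₀ : x ∉ C r2 i₀ := fun h => hx2 ⟨h, hxX⟩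
          exact ⟨h2 ⟨hblob'sub r2 hx1, hxi₀⟩, hxX⟩
    have IH := ih S' R' hcard' hRS' hS'fin k m C' hIa' hIb' hIc' hdisj' hII'
    -- arithmetic
    have e1 : (S \ X).encard + X.encard = S.encard :=
      Set.encard_diff_add_encard_of_subset hXS
    have e2 : (R \ {r}).encard + 1 = R.encard :=
      Set.encard_diff_singleton_add_one hrR
    have hXk : (k : ℕ∞) ≤ X.encard := hIc r hrR js hjs
    calc (k : ℕ∞) * R.encard = (k : ℕ∞) * (R \ {r}).encard + (k : ℕ∞) * 1 := by
          rw [← e2, mul_add]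
      _ ≤ (S \ X).encard + X.encard := add_le_add IH (by simpa using hXk)
      _ = S.encard := e1

/-- **The combinatorial lemma behind the Burton–Keane argument**
(Chatterjee–Sen, Lemma 7.3; Meester–Roy, Lemma 3.2).  Let `R` be a finite nonempty
subset of `S` such that every `r ∈ R` has `m r ≥ 3` pairwise disjoint "branches"
`C r 0, …, C r (m r - 1) ⊆ S`, each avoiding `r` and of cardinality at least `k`,
and such that any two distinct `r, r' ∈ R` satisfy condition (IIa) or (IIb) below.
Then `|S| ≥ k |R|`. -/
theorem burton_keane_combinatorial_lemma
    {α : Type*} (S R : Set α) (hRS : R ⊆ S) (hRfin : R.Finite) (hRne : R.Nonempty)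
    (k : ℕ) (hk : 0 < k)
    (m : α → ℕ) (C : α → ℕ → Set α)
    (hIa : ∀ r ∈ R, 3 ≤ m r)
    (hIb : ∀ r ∈ R, ∀ i < m r, r ∉ C r i ∧ C r i ⊆ S)
    (hIc : ∀ r ∈ R, ∀ i < m r, (k : ℕ∞) ≤ (C r i).encard)
    (hdisj : ∀ r ∈ R, ∀ i < m r, ∀ j < m r, i ≠ j → Disjoint (C r i) (C r j))
    (hII : ∀ r ∈ R, ∀ r' ∈ R, r ≠ r' →
      Disjoint ((⋃ j < m r, C r j) ∪ {r}) ((⋃ i < m r', C r' i) ∪ {r'}) ∨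
      ∃ i₀ < m r', ∃ j₀ < m r,
        ((⋃ j < m r, C r j) ∪ {r}) \ C r j₀ ⊆ C r' i₀ ∧
        ((⋃ i < m r', C r' i) ∪ {r'}) \ C r' i₀ ⊆ C r j₀) :
    (k : ℕ∞) * R.encard ≤ S.encard := by
  by_cases hS : S.Finite
  · exact bk_aux R.ncard S R le_rfl hRS hS k m C hIa hIb hIc hdisj hII
  · rw [Set.Infinite.encard_eq hS]
    exact le_top
end
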